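/- arXiv:2308.16004 — 5 statements merged into one kernel-verified Lean document; each statement's English description precedes it below -/
import Mathlib

section
/- Let κ ≤ 0 ≤ K be real numbers, set K_m = max(|κ|, |K|), and assume K_m > 0. Define s(κ,b) = sinh(√(-κ)·b)/√(-κ) if κ < 0 and s(κ,b) = b if κ = 0, and S(K,b) = sin(√K·b)/√K if K > 0 and S(K,b) = b if K = 0. Then for all b with 0 < b ≤ 1/√K_m, we have s(κ,b)/S(K,b) ≤ 3. -/
noncomputable def jacobiLower (κ b : ℝ) : ℝ :=
  if κ < 0 then Real.sinh (Real.sqrt (-κ) * b) / Real.sqrt (-κ) else b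

noncomputable def jacobiUpper (K b : ℝ) : ℝ :=
  if 0 < K then Real.sin (Real.sqrt K * b) / Real.sqrt K else b

lemma aux_exp_le {x : ℝ} (h0 : 0 ≤ x) (h1 : x ≤ 1) : Real.exp x ≤ 1 + 2 * x := by
  have hc := convexOn_exp.2 (Set.mem_univ (0:ℝ)) (Set.mem_univ (1:ℝ))
    (by linarith : (0:ℝ) ≤ 1 - x) h0 (by ring)
  simp only [smul_eq_mul, mul_zero, mul_one, zero_add, Real.exp_zero] at hc
  have he : Real.exp 1 ≤ 3 := le_trans Real.exp_one_lt_d9.le (by norm_num)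
  nlinarith [hc]

lemma aux_sinh_le {x : ℝ} (h0 : 0 ≤ x) (h1 : x ≤ 1) : Real.sinh x ≤ 3 / 2 * x := by
  rw [Real.sinh_eq]
  have h2 : 1 - x ≤ Real.exp (-x) := by
    have := Real.add_one_le_exp (-x); linarith
  have h3 := aux_exp_le h0 h1
  linarith

lemma aux_sin_ge {x : ℝ} (h0 : 0 < x) (h1 : x ≤ 1) : 3 / 4 * x ≤ Real.sin x := by
  have := Real.sin_gt_sub_cube h0
  nlinarith [pow_le_pow_left₀ h0.le h1 3, sq_nonneg x]

theorem jacobi_ratio_le_three (κ K : ℝ) (hκ : κ ≤ 0) (hK : 0 ≤ K)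
    (hKm : 0 < max |κ| |K|) (b : ℝ) (hb0 : 0 < b)
    (hb1 : b ≤ 1 / Real.sqrt (max |κ| |K|)) :
    jacobiLower κ b / jacobiUpper K b ≤ 3 := by
  set m := max |κ| |K| with hm
  have hmr : 0 < Real.sqrt m := Real.sqrt_pos.2 hKm
  have hbm : Real.sqrt m * b ≤ 1 := by
    rw [le_div_iff₀ hmr] at hb1; linarith [mul_comm (Real.sqrt m) b]
  -- bound on lower
  have hlow : jacobiLower κ b ≤ 3 / 2 * b := by
    unfold jacobiLower
    split_ifs with h
    · have hκpos : 0 < -κ := by linarith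
      have hs : 0 < Real.sqrt (-κ) := Real.sqrt_pos.2 hκpos
      have hle : Real.sqrt (-κ) ≤ Real.sqrt m := by
        apply Real.sqrt_le_sqrt
        calc -κ = |κ| := by rw [abs_of_nonpos hκ]
        _ ≤ m := le_max_left _ _
      have hx1 : Real.sqrt (-κ) * b ≤ 1 := by
        calc Real.sqrt (-κ) * b ≤ Real.sqrt m * b :=
              mul_le_mul_of_nonneg_right hle hb0.le
        _ ≤ 1 := hbm
      have hx0 : 0 ≤ Real.sqrt (-κ) * b := by positivity
      have := aux_sinh_le hx0 hx1
      rw [div_le_iff₀ hs]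
      calc Real.sinh (Real.sqrt (-κ) * b) ≤ 3 / 2 * (Real.sqrt (-κ) * b) := this
      _ = 3 / 2 * b * Real.sqrt (-κ) := by ring
    · linarith
  have hup : 3 / 4 * b ≤ jacobiUpper K b := by
    unfold jacobiUpper
    split_ifs with h
    · have hs : 0 < Real.sqrt K := Real.sqrt_pos.2 h
      have hle : Real.sqrt K ≤ Real.sqrt m := by
        apply Real.sqrt_le_sqrt
        calc K = |K| := (abs_of_nonneg hK).symm
        _ ≤ m := le_max_right _ _
      have hx1 : Real.sqrt K * b ≤ 1 := by
        calc Real.sqrt K * b ≤ Real.sqrt m * b :=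
              mul_le_mul_of_nonneg_right hle hb0.le
        _ ≤ 1 := hbm
      have hx0 : 0 < Real.sqrt K * b := by positivity
      have := aux_sin_ge hx0 hx1
      rw [le_div_iff₀ hs]
      calc 3 / 4 * b * Real.sqrt K = 3 / 4 * (Real.sqrt K * b) := by ring
      _ ≤ Real.sin (Real.sqrt K * b) := this
    · linarith
  have hup0 : 0 < jacobiUpper K b := lt_of_lt_of_le (by linarith) hup
  rw [div_le_iff₀ hup0]
  linarith
end

section
/- For all real t with 0 < t < π/2, we have (1 + 2t²)·t ≤ 4·tan(t). -/
open Real Set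

theorem tan_cubic_lower {x : ℝ} (h1 : 0 < x) (h2 : x < π / 2) :
    x + x ^ 3 / 3 ≤ Real.tan x := by
  let U := Ico 0 (π / 2)
  have intU : interior U = Ioo 0 (π / 2) := interior_Ico
  have half_pi_pos : 0 < π / 2 := div_pos pi_pos two_pos
  have cos_pos {y : ℝ} (hy : y ∈ U) : 0 < cos y :=
    cos_pos_of_mem_Ioo (Ico_subset_Ioo_left (neg_lt_zero.mpr half_pi_pos) hy)
  have tan_cts_U : ContinuousOn tan U := by
    apply ContinuousOn.mono continuousOn_tan
    intro z hz
    exact (cos_pos hz).ne'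
  have f_cts : ContinuousOn (fun y : ℝ => tan y - y - y ^ 3 / 3) U :=
    (tan_cts_U.sub continuousOn_id).sub (by fun_prop)
  have deriv_pos : ∀ y ∈ interior U,
      0 < deriv (fun y' : ℝ => tan y' - y' - y' ^ 3 / 3) y := by
    intro y hy
    rw [intU] at hy
    have hcy : cos y ≠ 0 := (cos_pos ⟨hy.1.le, hy.2⟩).ne'
    have hd : HasDerivAt (fun y' : ℝ => tan y' - y' - y' ^ 3 / 3)
        (1 / cos y ^ 2 - 1 - (3 * y ^ 2) / 3) y := by
      have h1' := (hasDerivAt_tan hcy).sub (hasDerivAt_id y)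
      have h2' : HasDerivAt (fun y' : ℝ => y' ^ 3 / 3) ((3 * y ^ 2) / 3) y := by
        simpa using ((hasDerivAt_pow 3 y).div_const 3)
      exact h1'.sub h2'
    rw [hd.deriv]
    have htan : y < tan y := lt_tan hy.1 hy.2
    have h1cos : 1 / cos y ^ 2 = 1 + tan y ^ 2 := by
      rw [← inv_one_add_tan_sq hcy, one_div, inv_inv]
    rw [h1cos]
    nlinarith [hy.1, htan]
  have mono := strictMonoOn_of_deriv_pos (convex_Ico 0 (π / 2)) f_cts deriv_pos
  have key := mono (left_mem_Ico.mpr half_pi_pos) ⟨h1.le, h2⟩ h1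
  simp only [tan_zero] at key
  nlinarith [key]

theorem mul_le_four_tan (t : ℝ) (ht0 : 0 < t) (ht1 : t < Real.pi / 2) :
    (1 + 2 * t ^ 2) * t ≤ 4 * Real.tan t := by
  have h := tan_cubic_lower ht0 ht1
  have hpi : Real.pi < 3.15 := pi_lt_d2
  nlinarith [sq_nonneg t, ht0.le]
end

section
/- Define the sequence (A_t) of nonnegative reals by A_0 = 0 and A_t = (0.5 + 2·A_{t-1})²·(0.3 + A_{t-1}) for t ≥ 1. Then (A_t) is strictly increasing from t = 0 and tends to infinity as t → ∞. -/
theorem corrected_distortion_diverges (A : ℕ → ℝ) (h0 : A 0 = 0)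
    (hrec : ∀ t : ℕ, A (t + 1) = (0.5 + 2 * A t) ^ 2 * (0.3 + A t)) :
    StrictMono A ∧ Filter.Tendsto A Filter.atTop Filter.atTop := by
  have hpos : ∀ t, 0 ≤ A t := by
    intro t
    induction t with
    | zero => simp [h0]
    | succ n ih => rw [hrec]; positivity
  have hstep : ∀ t, A t + 0.07 ≤ A (t + 1) := by
    intro t
    rw [hrec]
    nlinarith [hpos t, sq_nonneg (A t), sq_nonneg (A t - 0.0234375), pow_nonneg (hpos t) 3]
  constructor
  · exact strictMono_nat_of_lt_succ fun n => by linarith [hstep n]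
  · have hlb : ∀ t : ℕ, 0.07 * t ≤ A t := by
      intro t
      induction t with
      | zero => simp [h0]
      | succ n ih =>
        have := hstep n
        push_cast
        linarith
    refine Filter.tendsto_atTop_mono hlb ?_
    exact Filter.Tendsto.const_mul_atTop (by norm_num) tendsto_natCast_atTop_atTop
end

section
/- Let H be a real inner product space, let F : H → H be L-Lipschitz with L > 0, and let 0 < η ≤ 1/(8L). Define z_1 = z_0 = z_{-1} and z_{t+1} = z_t − η·(2·F(z_t) − F(z_{t-1})) for t ≥ 0. Then for every t ≥ 0, (1/2)·‖F(z_t)‖ ≤ ‖F(z_{t+1})‖ ≤ (3/2)·‖F(z_t)‖. -/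
theorem ogda_gradient_norm_ratio {H : Type*} [NormedAddCommGroup H]
    [InnerProductSpace ℝ H] (F : H → H) (L η : ℝ) (hL : 0 < L)
    (hlip : ∀ x y : H, ‖F x - F y‖ ≤ L * ‖x - y‖)
    (hη0 : 0 < η) (hη : η ≤ 1 / (8 * L)) (z : ℤ → H)
    (hinit : z (-1) = z 0 ∧ z 0 = z 1)
    (hrec : ∀ t : ℤ, 1 ≤ t → z (t + 1) = z t - η • (2 • F (z t) - F (z (t - 1)))) :
    ∀ t : ℤ, 0 ≤ t →
      (1 / 2) * ‖F (z t)‖ ≤ ‖F (z (t + 1))‖ ∧ ‖F (z (t + 1))‖ ≤ (3 / 2) * ‖F (z t)‖ := by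
  have hLη : L * η ≤ 1 / 8 := by
    have := mul_le_mul_of_nonneg_left hη hL.le
    calc L * η ≤ L * (1 / (8 * L)) := this
    _ = 1 / 8 := by field_simp
  refine Int.le_induction ?_ ?_
  · -- base
    rw [show (0:ℤ) + 1 = 1 from rfl, ← hinit.2]
    constructor <;> nlinarith [norm_nonneg (F (z 0))]
  · intro t ht ih
    have hrec' := hrec (t + 1) (by omega)
    have hsub : z (t + 1 + 1) - z (t + 1) = -(η • (2 • F (z (t+1)) - F (z (t+1-1)))) := by
      rw [hrec']; abel
    have hnormstep : ‖z (t + 1 + 1) - z (t + 1)‖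
        = η * ‖2 • F (z (t+1)) - F (z t)‖ := by
      rw [hsub, norm_neg, norm_smul, Real.norm_eq_abs, abs_of_pos hη0,
        show t + 1 - 1 = t by ring]
    have hdiff : ‖F (z (t+1+1)) - F (z (t+1))‖ ≤ L * η * ‖2 • F (z (t+1)) - F (z t)‖ := by
      calc ‖F (z (t+1+1)) - F (z (t+1))‖ ≤ L * ‖z (t+1+1) - z (t+1)‖ := hlip _ _
      _ = L * η * ‖2 • F (z (t+1)) - F (z t)‖ := by rw [hnormstep]; ring
    have htri : ‖2 • F (z (t+1)) - F (z t)‖ ≤ 2 * ‖F (z (t+1))‖ + ‖F (z t)‖ := by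
      calc ‖2 • F (z (t+1)) - F (z t)‖ ≤ ‖2 • F (z (t+1))‖ + ‖F (z t)‖ :=
        norm_sub_le _ _
      _ ≤ 2 * ‖F (z (t+1))‖ + ‖F (z t)‖ := by
        rw [two_smul]
        have := norm_add_le (F (z (t+1))) (F (z (t+1)))
        linarith
    have hFt : ‖F (z t)‖ ≤ 2 * ‖F (z (t+1))‖ := by linarith [ih.1]
    have hdiff2 : ‖F (z (t+1+1)) - F (z (t+1))‖ ≤ (1/2) * ‖F (z (t+1))‖ := by
      have h1 : L * η * ‖2 • F (z (t+1)) - F (z t)‖ ≤ L * η * (4 * ‖F (z (t+1))‖) := by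
        have hLη0 : 0 ≤ L * η := by positivity
        apply mul_le_mul_of_nonneg_left _ hLη0
        linarith
      have h2 : L * η * (4 * ‖F (z (t+1))‖) ≤ (1/2) * ‖F (z (t+1))‖ := by
        nlinarith [norm_nonneg (F (z (t+1)))]
      linarith
    constructor
    · have := norm_sub_norm_le (F (z (t+1))) (F (z (t+1+1)))
      rw [norm_sub_rev] at hdiff2
      linarith
    · have := norm_sub_norm_le (F (z (t+1+1))) (F (z (t+1)))
      linarith
end

section
/- Let H be a real inner product space, let F : H → H be L-Lipschitz with L > 0, let 0 < η ≤ 1/(20L), and define z_1 = z_0 = z_{-1} and z_{t+1} = z_t − η·(2·F(z_t) − F(z_{t-1})) for t ≥ 0. Then for every t ≥ 2, ‖z_t − z_{t-1}‖ ≤ (1 + 8Lη)·η·‖F(z_{t-1})‖ ≤ 2η·‖F(z_{t-1})‖. -/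
theorem ogda_step_length_bound {H : Type*} [NormedAddCommGroup H]
    [InnerProductSpace ℝ H] (F : H → H) (L η : ℝ) (hL : 0 < L)
    (hlip : ∀ x y : H, ‖F x - F y‖ ≤ L * ‖x - y‖)
    (hη0 : 0 < η) (hη : η ≤ 1 / (20 * L)) (z : ℤ → H)
    (hinit : z (-1) = z 0 ∧ z 0 = z 1)
    (hrec : ∀ t : ℤ, 1 ≤ t → z (t + 1) = z t - η • (2 • F (z t) - F (z (t - 1)))) :
    ∀ t : ℤ, 2 ≤ t →
      ‖z t - z (t - 1)‖ ≤ (1 + 8 * L * η) * η * ‖F (z (t - 1))‖ ∧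
        (1 + 8 * L * η) * η * ‖F (z (t - 1))‖ ≤ 2 * η * ‖F (z (t - 1))‖ := by
  have hLη : L * η ≤ 1 / 20 := by
    rw [le_div_iff₀ (by positivity)] at hη
    nlinarith
  -- general norm bound on one step
  have hstep : ∀ t : ℤ, 1 ≤ t →
      ‖z (t + 1) - z t‖ ≤ η * ‖F (z t)‖ + η * (L * ‖z t - z (t - 1)‖) := by
    intro t ht
    have h := hrec t ht
    have heq : z (t + 1) - z t = -(η • (F (z t) + (F (z t) - F (z (t - 1))))) := by
      rw [h]
      have : (2 : ℕ) • F (z t) - F (z (t - 1))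
          = F (z t) + (F (z t) - F (z (t - 1))) := by
        rw [two_smul]; abel
      rw [this]; abel
    rw [heq, norm_neg, norm_smul, Real.norm_eq_abs, abs_of_pos hη0]
    have h1 : ‖F (z t) + (F (z t) - F (z (t - 1)))‖
        ≤ ‖F (z t)‖ + ‖F (z t) - F (z (t - 1))‖ := norm_add_le _ _
    have h2 := hlip (z t) (z (t - 1))
    nlinarith [norm_nonneg (F (z t))]
  have key : ∀ t : ℤ, 2 ≤ t →
      ‖z t - z (t - 1)‖ ≤ (1 + 8 * L * η) * η * ‖F (z (t - 1))‖ := by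
    have hbase : ‖z 2 - z (2 - 1)‖ ≤ (1 + 8 * L * η) * η * ‖F (z (2 - 1))‖ := by
      have h := hrec 1 le_rfl
      norm_num at h ⊢
      have hz01 : z 0 = z 1 := hinit.2
      have heq : z 2 - z 1 = -(η • F (z 1)) := by
        rw [h, hz01]
        have : (2 : ℕ) • F (z 1) - F (z 1) = F (z 1) := by rw [two_smul]; abel
        rw [this]; abel
      rw [heq, norm_neg, norm_smul, Real.norm_eq_abs, abs_of_pos hη0]
      nlinarith [mul_nonneg (mul_nonneg hL.le hη0.le)
        (mul_nonneg hη0.le (norm_nonneg (F (z 1))))]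
    have hsucc : ∀ t : ℤ, 2 ≤ t →
        ‖z t - z (t - 1)‖ ≤ (1 + 8 * L * η) * η * ‖F (z (t - 1))‖ →
        ‖z (t + 1) - z (t + 1 - 1)‖ ≤ (1 + 8 * L * η) * η * ‖F (z (t + 1 - 1))‖ := by
      intro t ht ih
      have ht1 : (1 : ℤ) ≤ t := by omega
      have hs := hstep t ht1
      have hb : ‖F (z (t - 1))‖ ≤ ‖F (z t)‖ + L * ‖z t - z (t - 1)‖ := by
        have h2 := hlip (z (t - 1)) (z t)
        have h3 : ‖F (z (t - 1))‖ ≤ ‖F (z t)‖ + ‖F (z (t - 1)) - F (z t)‖ := by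
          have := norm_add_le (F (z t)) (F (z (t - 1)) - F (z t))
          simpa using this
        rw [norm_sub_rev (z (t-1)) (z t)] at h2
        linarith
      have hsimp : t + 1 - 1 = t := by ring
      rw [hsimp]
      set a := ‖F (z t)‖ with ha
      set b := ‖F (z (t - 1))‖ with hbdef
      set d := ‖z t - z (t - 1)‖ with hd
      have hd0 : 0 ≤ d := norm_nonneg _
      have ha0 : 0 ≤ a := norm_nonneg _
      have hb0 : 0 ≤ b := norm_nonneg _
      have hda : d ≤ 8 * η * a := by
        nlinarith [mul_pos hL hη0, mul_nonneg (mul_nonneg hL.le hη0.le) hd0,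
          mul_nonneg hη0.le ha0, mul_nonneg hη0.le hb0,
          mul_le_mul_of_nonneg_left hb
            (by positivity : (0:ℝ) ≤ (1 + 8 * L * η) * η)]
      calc ‖z (t + 1) - z t‖ ≤ η * a + η * (L * d) := hs
        _ ≤ (1 + 8 * L * η) * η * a := by nlinarith [mul_pos hL hη0]
    exact fun t ht => Int.le_induction hbase hsucc t ht
  intro t ht
  refine ⟨key t ht, ?_⟩
  nlinarith [norm_nonneg (F (z (t - 1))), mul_pos hL hη0,
    mul_nonneg hη0.le (norm_nonneg (F (z (t - 1))))]
end
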